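/- Fix Θ₁, Θ₂, Θ₃ ∈ [0, π) with Θ₁ + Θ₂ + Θ₃ < π and fix rⱼ, rₖ > 0 for {j,k} = {1,2,3} \ {i}. Then ϑᵢ(r₁, r₂, r₃) → 0 as rᵢ → ∞. -/

import Mathlib

/-- The inverse hyperbolic cosine: `arcosh x = log (x + √(x² − 1))` for `x ≥ 1`. -/
noncomputable def arcosh (x : ℝ) : ℝ := Real.log (x + Real.sqrt (x ^ 2 - 1))

/-- The hyperbolic distance `dₖ` between the centers of two hyperbolic disks of radii
`r (k+1)`, `r (k+2)` meeting at exterior intersection angle `Θ k` (hyperbolic cosine law). -/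
noncomputable def dist3 (Θ r : Fin 3 → ℝ) (k : Fin 3) : ℝ :=
  arcosh (Real.cosh (r (k + 1)) * Real.cosh (r (k + 2)) +
    Real.cos (Θ k) * Real.sinh (r (k + 1)) * Real.sinh (r (k + 2)))

/-- The inner angle `ϑᵢ` at the `i`-th vertex of the hyperbolic triangle of centers of a
three-circle configuration, by the hyperbolic law of cosines. -/
noncomputable def theta3 (Θ r : Fin 3 → ℝ) (i : Fin 3) : ℝ :=
  Real.arccos ((Real.cosh (dist3 Θ r (i + 1)) * Real.cosh (dist3 Θ r (i + 2)) -
      Real.cosh (dist3 Θ r i)) /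
    (Real.sinh (dist3 Θ r (i + 1)) * Real.sinh (dist3 Θ r (i + 2))))

private lemma inv_add_sqrt {x : ℝ} (hx : 1 ≤ x) :
    (x + Real.sqrt (x ^ 2 - 1))⁻¹ = x - Real.sqrt (x ^ 2 - 1) := by
  have hs : Real.sqrt (x ^ 2 - 1) ^ 2 = x ^ 2 - 1 := Real.sq_sqrt (by nlinarith)
  have h1 : (x + Real.sqrt (x ^ 2 - 1)) * (x - Real.sqrt (x ^ 2 - 1)) = 1 := by nlinarith
  exact inv_eq_of_mul_eq_one_right h1

private lemma pos_add_sqrt {x : ℝ} (hx : 1 ≤ x) : 0 < x + Real.sqrt (x ^ 2 - 1) := by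
  have := Real.sqrt_nonneg (x ^ 2 - 1); linarith

private lemma cosh_arcosh {x : ℝ} (hx : 1 ≤ x) : Real.cosh (arcosh x) = x := by
  rw [arcosh, Real.cosh_eq, Real.exp_log (pos_add_sqrt hx), Real.exp_neg,
    Real.exp_log (pos_add_sqrt hx), inv_add_sqrt hx]
  ring

private lemma sinh_arcosh {x : ℝ} (hx : 1 ≤ x) :
    Real.sinh (arcosh x) = Real.sqrt (x ^ 2 - 1) := by
  rw [arcosh, Real.sinh_eq, Real.exp_log (pos_add_sqrt hx), Real.exp_neg,
    Real.exp_log (pos_add_sqrt hx), inv_add_sqrt hx]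
  ring

private lemma one_le_aux {c x y : ℝ} (h1 : -1 ≤ c) (h2 : c ≤ 1) :
    1 ≤ Real.cosh x * Real.cosh y + c * Real.sinh x * Real.sinh y := by
  nlinarith [Real.cosh_add x y, Real.cosh_sub x y, Real.one_le_cosh (x + y),
    Real.one_le_cosh (x - y)]

open Filter Topology in
private lemma tendsto_cosh_atTop : Tendsto Real.cosh atTop atTop := by
  apply tendsto_atTop_mono (fun x => ?_) (Real.tendsto_exp_atTop.atTop_div_const two_pos)
  have := (Real.exp_pos (-x)).le
  rw [Real.cosh_eq]; linarith

open Filter Topology in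
private lemma tendsto_x_div_sqrt : Tendsto (fun x : ℝ => x / Real.sqrt (x ^ 2 - 1))
    atTop (𝓝 1) := by
  have h0 : Tendsto (fun x : ℝ => Real.sqrt (x ^ 2 - 1) / x) atTop (𝓝 1) := by
    have hbase : Tendsto (fun x : ℝ => 1 - 1 / x ^ 2) atTop (𝓝 1) := by
      have h2 : Tendsto (fun x : ℝ => 1 / x ^ 2) atTop (𝓝 0) := by
        have hp : Tendsto (fun x : ℝ => x ^ 2) atTop atTop :=
          tendsto_pow_atTop (by norm_num)
        simpa [one_div, Pi.inv_def] using hp.inv_tendsto_atTop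
      simpa using tendsto_const_nhds.sub h2
    have h1 : Tendsto (fun x : ℝ => Real.sqrt (1 - 1 / x ^ 2)) atTop (𝓝 1) := by
      have := (Real.continuous_sqrt.tendsto 1).comp hbase
      simpa [Function.comp_def] using this
    refine h1.congr' ?_
    filter_upwards [eventually_ge_atTop 1] with x hx
    have hx0 : 0 < x := by linarith
    rw [show (1 : ℝ) - 1 / x ^ 2 = (x ^ 2 - 1) / x ^ 2 by field_simp,
      Real.sqrt_div (by nlinarith), Real.sqrt_sq hx0.le]
  have := h0.inv₀ one_ne_zero
  rw [inv_one] at this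
  simpa [inv_div] using this

open Filter Topology in
theorem three_circle_angle_tendsto_zero
    (Θ : Fin 3 → ℝ)
    (hΘ : ∀ τ, Θ τ ∈ Set.Ico 0 Real.pi)
    (hsum : Θ 0 + Θ 1 + Θ 2 < Real.pi)
    (i : Fin 3) (r : Fin 3 → ℝ) (hr : ∀ τ, τ ≠ i → 0 < r τ) :
    Tendsto (fun t => theta3 Θ (Function.update r i t) i) atTop (𝓝 0) := by
  have hne1 : i + 1 ≠ i := (by decide : ∀ j : Fin 3, j + 1 ≠ j) i
  have hne2 : i + 2 ≠ i := (by decide : ∀ j : Fin 3, j + 2 ≠ j) i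
  have e11 : i + 1 + 1 = i + 2 := (by decide : ∀ j : Fin 3, j + 1 + 1 = j + 2) i
  have e12 : i + 1 + 2 = i := (by decide : ∀ j : Fin 3, j + 1 + 2 = j) i
  have e21 : i + 2 + 1 = i := (by decide : ∀ j : Fin 3, j + 2 + 1 = j) i
  have e22 : i + 2 + 2 = i + 1 := (by decide : ∀ j : Fin 3, j + 2 + 2 = j + 1) i
  set a := r (i + 2) with ha_def
  set b := r (i + 1) with hb_def
  have ha : 0 < a := hr _ hne2
  have hb : 0 < b := hr _ hne1
  have hcos : ∀ τ : Fin 3, -1 < Real.cos (Θ τ) := by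
    intro τ
    have h := hΘ τ
    have := Real.cos_lt_cos_of_nonneg_of_le_pi h.1 le_rfl h.2
    rwa [Real.cos_pi] at this
  set c1 := Real.cos (Θ (i + 1)) with hc1_def
  set c2 := Real.cos (Θ (i + 2)) with hc2_def
  have hc1 : -1 < c1 := hcos _
  have hc1' : c1 ≤ 1 := Real.cos_le_one _
  have hc2 : -1 < c2 := hcos _
  have hc2' : c2 ≤ 1 := Real.cos_le_one _
  set u : ℝ → ℝ := fun t => Real.cosh a * Real.cosh t + c1 * Real.sinh a * Real.sinh t
    with hu_def
  set v : ℝ → ℝ := fun t => Real.cosh t * Real.cosh b + c2 * Real.sinh t * Real.sinh b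
    with hv_def
  set C : ℝ := Real.cosh b * Real.cosh a + Real.cos (Θ i) * Real.sinh b * Real.sinh a
    with hC_def
  have hu1 : ∀ t, 1 ≤ u t := fun t => one_le_aux hc1.le hc1' (x := a) (y := t)
  have hv1 : ∀ t, 1 ≤ v t := fun t => one_le_aux hc2.le hc2' (x := t) (y := b)
  have hC1 : 1 ≤ C := one_le_aux (hcos i).le (Real.cos_le_one _) (x := b) (y := a)
  -- key pointwise identity
  have key : ∀ t : ℝ, theta3 Θ (Function.update r i t) i =
      Real.arccos ((u t * v t - C) /
        (Real.sqrt ((u t) ^ 2 - 1) * Real.sqrt ((v t) ^ 2 - 1))) := by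
    intro t
    have h1 : dist3 Θ (Function.update r i t) (i + 1) = arcosh (u t) := by
      rw [dist3, e11, e12, Function.update_self,
        Function.update_of_ne hne2, hu_def]
    have h2 : dist3 Θ (Function.update r i t) (i + 2) = arcosh (v t) := by
      rw [dist3, e21, e22, Function.update_self,
        Function.update_of_ne hne1, hv_def]
    have h3 : dist3 Θ (Function.update r i t) i = arcosh C := by
      rw [dist3, Function.update_of_ne hne1, Function.update_of_ne hne2, hC_def]
    rw [theta3, h1, h2, h3, cosh_arcosh (hu1 t), cosh_arcosh (hv1 t), cosh_arcosh hC1,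
      sinh_arcosh (hu1 t), sinh_arcosh (hv1 t)]
  -- u and v tend to infinity
  have hcosh1 : Tendsto (fun t : ℝ => Real.cosh (t + a)) atTop atTop :=
    tendsto_cosh_atTop.comp (tendsto_atTop_add_const_right atTop a tendsto_id)
  have hcosh2 : Tendsto (fun t : ℝ => Real.cosh (t + b)) atTop atTop :=
    tendsto_cosh_atTop.comp (tendsto_atTop_add_const_right atTop b tendsto_id)
  have hu : Tendsto u atTop atTop := by
    apply tendsto_atTop_mono (fun t => ?_)
      (hcosh1.const_mul_atTop (show (0:ℝ) < (1 + c1) / 2 by linarith))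
    have := Real.one_le_cosh (t - a)
    nlinarith [Real.cosh_add t a, Real.cosh_sub t a, Real.one_le_cosh (t - a)]
  have hv : Tendsto v atTop atTop := by
    apply tendsto_atTop_mono (fun t => ?_)
      (hcosh2.const_mul_atTop (show (0:ℝ) < (1 + c2) / 2 by linarith))
    nlinarith [Real.cosh_add t b, Real.cosh_sub t b, Real.one_le_cosh (t - b)]
  -- the quotient tends to 1
  have hF : Tendsto (fun t => (u t * v t - C) /
      (Real.sqrt ((u t) ^ 2 - 1) * Real.sqrt ((v t) ^ 2 - 1))) atTop (𝓝 1) := by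
    have huv : Tendsto (fun t => u t * v t) atTop atTop := hu.atTop_mul_atTop₀ hv
    have hc : Tendsto (fun t => C / (u t * v t)) atTop (𝓝 0) :=
      tendsto_const_nhds.div_atTop huv
    have h1 : Tendsto (fun t => (1 - C / (u t * v t)) *
        (u t / Real.sqrt ((u t) ^ 2 - 1)) * (v t / Real.sqrt ((v t) ^ 2 - 1)))
        atTop (𝓝 ((1 - 0) * 1 * 1)) :=
      ((tendsto_const_nhds.sub hc).mul (tendsto_x_div_sqrt.comp hu)).mul
        (tendsto_x_div_sqrt.comp hv)
    norm_num at h1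
    refine h1.congr' ?_
    filter_upwards [hu.eventually_ge_atTop 2, hv.eventually_ge_atTop 2] with t hut hvt
    have hsu : 0 < Real.sqrt ((u t) ^ 2 - 1) := Real.sqrt_pos.mpr (by nlinarith)
    have hsv : 0 < Real.sqrt ((v t) ^ 2 - 1) := Real.sqrt_pos.mpr (by nlinarith)
    have hu0 : (0:ℝ) < u t := by linarith
    have hv0 : (0:ℝ) < v t := by linarith
    field_simp
  have harccos : Tendsto (fun t => Real.arccos ((u t * v t - C) /
      (Real.sqrt ((u t) ^ 2 - 1) * Real.sqrt ((v t) ^ 2 - 1)))) atTop (𝓝 0) := by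
    have := (Real.continuous_arccos.tendsto 1).comp hF
    rwa [Real.arccos_one] at this
  exact harccos.congr (fun t => (key t).symm)
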